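/- Let K ≥ 1, let r₁, …, r_n ∈ ℝ^K, let R̂ := (1/n) ∑_{i=1}^n δ_{r_i}, let α ∈ (0,1), ε ≥ 0, and w ∈ ℝ^K. For a Borel probability measure μ on ℝ^K with finite first moment define CVaR_α^μ(w) := inf_{η ∈ ℝ} { η + (1/α) ∫ max(−⟨r,w⟩ − η, 0) dμ(r) }. Then the supremum, over all Borel probability measures R on ℝ^K with finite first moment satisfying W₁(R, R̂) ≤ ε, of CVaR_α^R(w), equals CVaR_α^{R̂}(w) + (ε/α)‖w‖, where ‖·‖ and ⟨·,·⟩ are the Euclidean norm and inner product. -/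

import Mathlib

open MeasureTheory ENNReal

noncomputable section

/-- A coupling of two measures: a measure on the product whose marginals are the given
measures. -/
def IsCoupling {X Y : Type*} [MeasurableSpace X] [MeasurableSpace Y]
    (π : Measure (X × Y)) (μ : Measure X) (ν : Measure Y) : Prop :=
  π.map Prod.fst = μ ∧ π.map Prod.snd = ν

/-- The 1-Wasserstein distance (as an extended nonnegative real). -/
noncomputable def W1 {X : Type*} [MeasurableSpace X] [PseudoEMetricSpace X]
    (μ ν : Measure X) : ℝ≥0∞ :=
  ⨅ (π : Measure (X × X)) (_ : IsCoupling π μ ν), ∫⁻ p, edist p.1 p.2 ∂π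

/-- The empirical measure of the sample `r₁, …, r_n`. -/
noncomputable def empiricalMeasure {K : ℕ} (n : ℕ) (r : Fin n → EuclideanSpace ℝ (Fin K)) :
    Measure (EuclideanSpace ℝ (Fin K)) :=
  (n : ℝ≥0∞)⁻¹ • ∑ i : Fin n, Measure.dirac (r i)

/-- Conditional value-at-risk at level `α` of the linear loss `r ↦ −⟨r,w⟩` under `μ`,
in its Rockafellar–Uryasev infimal representation. -/
noncomputable def CVaR {K : ℕ} (α : ℝ) (μ : Measure (EuclideanSpace ℝ (Fin K)))
    (w : EuclideanSpace ℝ (Fin K)) : ℝ :=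
  ⨅ η : ℝ, (η + (1 / α) * ∫ x, max (-(inner ℝ x w : ℝ) - η) 0 ∂μ)

section Aux
variable {K : ℕ}

variable {K : ℕ}

lemma integrable_dirac'' {X : Type*} [MeasurableSpace X] [MeasurableSingletonClass X]
    {f : X → ℝ} (hf : StronglyMeasurable f) (a : X) : Integrable f (Measure.dirac a) := by
  refine ⟨hf.aestronglyMeasurable, ?_⟩
  simp [HasFiniteIntegral, lintegral_dirac]

lemma cont_f (w : EuclideanSpace ℝ (Fin K)) (η : ℝ) :
    Continuous (fun x : EuclideanSpace ℝ (Fin K) => max (-(inner ℝ x w : ℝ) - η) 0) :=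
  (((continuous_id.inner continuous_const).neg.sub continuous_const).max continuous_const)

lemma integrable_of_linear_growth {μ : Measure (EuclideanSpace ℝ (Fin K))} [IsFiniteMeasure μ]
    (hμ : ∫⁻ x, (‖x‖₊ : ℝ≥0∞) ∂μ < ⊤) {f : EuclideanSpace ℝ (Fin K) → ℝ}
    (hf : Continuous f) (a b : ℝ) (hb : ∀ x, ‖f x‖ ≤ a * ‖x‖ + b) : Integrable f μ := by
  have hnorm : Integrable (fun x : EuclideanSpace ℝ (Fin K) => ‖x‖) μ := by
    refine ⟨continuous_norm.aestronglyMeasurable, ?_⟩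
    simpa [HasFiniteIntegral, enorm_norm, enorm_eq_nnnorm] using hμ
  refine ((hnorm.const_mul a).add (integrable_const b)).mono hf.aestronglyMeasurable ?_
  refine Filter.Eventually.of_forall fun x => (hb x).trans ?_
  rw [Real.norm_eq_abs]
  exact le_abs_self _

lemma integrable_f {μ : Measure (EuclideanSpace ℝ (Fin K))} [IsFiniteMeasure μ]
    (hμ : ∫⁻ x, (‖x‖₊ : ℝ≥0∞) ∂μ < ⊤) (w : EuclideanSpace ℝ (Fin K)) (η : ℝ) :
    Integrable (fun x => max (-(inner ℝ x w : ℝ) - η) 0) μ := by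
  refine integrable_of_linear_growth hμ (cont_f w η) ‖w‖ |η| fun x => ?_
  have h0 : (0:ℝ) ≤ max (-(inner ℝ x w : ℝ) - η) 0 := le_max_right _ _
  rw [Real.norm_eq_abs, abs_of_nonneg h0]
  have h1 : |(inner ℝ x w : ℝ)| ≤ ‖x‖ * ‖w‖ := abs_real_inner_le_norm x w
  have h2 : -(inner ℝ x w : ℝ) ≤ |(inner ℝ x w : ℝ)| := neg_le_abs _
  have h3 : -η ≤ |η| := neg_le_abs _
  have h4 : (0:ℝ) ≤ ‖w‖ * ‖x‖ + |η| := by positivity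
  apply max_le _ h4
  nlinarith [abs_nonneg η]

lemma integrable_lin {μ : Measure (EuclideanSpace ℝ (Fin K))} [IsFiniteMeasure μ]
    (hμ : ∫⁻ x, (‖x‖₊ : ℝ≥0∞) ∂μ < ⊤) (w : EuclideanSpace ℝ (Fin K)) :
    Integrable (fun x => -(inner ℝ x w : ℝ)) μ := by
  refine integrable_of_linear_growth hμ ((continuous_id.inner continuous_const).neg) ‖w‖ 0 fun x => ?_
  rw [Real.norm_eq_abs, abs_neg]
  have h1 : |(inner ℝ x w : ℝ)| ≤ ‖x‖ * ‖w‖ := abs_real_inner_le_norm x w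
  nlinarith

lemma bddBelow_h {α : ℝ} (hα0 : 0 < α) (hα1 : α < 1) (w : EuclideanSpace ℝ (Fin K))
    (μ : Measure (EuclideanSpace ℝ (Fin K))) [IsProbabilityMeasure μ]
    (hμ : ∫⁻ x, (‖x‖₊ : ℝ≥0∞) ∂μ < ⊤) :
    BddBelow (Set.range fun η : ℝ => η + (1 / α) * ∫ x, max (-(inner ℝ x w : ℝ) - η) 0 ∂μ) := by
  set I := ∫ x, (-(inner ℝ x w : ℝ)) ∂μ with hI
  refine ⟨min ((1/α) * I) 0, ?_⟩
  rintro _ ⟨η, rfl⟩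
  have hint : 0 ≤ ∫ x, max (-(inner ℝ x w : ℝ) - η) 0 ∂μ :=
    integral_nonneg fun x => le_max_right _ _
  rcases le_or_gt 0 η with hη | hη
  · have : (0:ℝ) ≤ η + (1/α) * ∫ x, max (-(inner ℝ x w : ℝ) - η) 0 ∂μ := by
      have : (0:ℝ) ≤ (1/α) * ∫ x, max (-(inner ℝ x w : ℝ) - η) 0 ∂μ := by positivity
      linarith
    exact (min_le_right _ _).trans this
  · have h1 : I - η ≤ ∫ x, max (-(inner ℝ x w : ℝ) - η) 0 ∂μ := by
      have he : ∫ x, ((-(inner ℝ x w : ℝ)) - η) ∂μ = I - η := by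
        rw [integral_sub (integrable_lin hμ w) (integrable_const η), integral_const]
        simp only [probReal_univ, smul_eq_mul, one_mul, hI]
      rw [← he]
      exact integral_mono ((integrable_lin hμ w).sub (integrable_const η))
        (integrable_f hμ w η) fun x => le_max_left _ _
    have hmono : (1/α) * (I - η) ≤ (1/α) * ∫ x, max (-(inner ℝ x w : ℝ) - η) 0 ∂μ :=
      mul_le_mul_of_nonneg_left h1 (by positivity)
    have key : (1/α) * I ≤ η + (1/α) * (I - η) := by
      have h1α : 1 ≤ 1/α := by
        rw [le_div_iff₀ hα0]; linarith
      nlinarith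
    exact (min_le_left _ _).trans (by linarith)


variable {K : ℕ}


lemma natcast_inv_ne_top {n : ℕ} (hn : 1 ≤ n) : ((n : ℝ≥0∞))⁻¹ ≠ ⊤ := by
  rw [Ne, ENNReal.inv_eq_top, Nat.cast_eq_zero]
  omega

lemma isProb_empirical {n : ℕ} (hn : 1 ≤ n) (r : Fin n → EuclideanSpace ℝ (Fin K)) :
    IsProbabilityMeasure (empiricalMeasure n r) := by
  constructor
  unfold empiricalMeasure
  have hn0 : (n : ℝ≥0∞) ≠ 0 := by simp; omega
  simp [Measure.smul_apply, Measure.finset_sum_apply, measure_univ, smul_eq_mul,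
    ENNReal.inv_mul_cancel hn0 (natCast_ne_top n)]

lemma integrable_empirical {n : ℕ} (hn : 1 ≤ n) (r : Fin n → EuclideanSpace ℝ (Fin K))
    {f : EuclideanSpace ℝ (Fin K) → ℝ} (hf : StronglyMeasurable f) :
    Integrable f (empiricalMeasure n r) := by
  unfold empiricalMeasure
  exact (integrable_finset_sum_measure.2 fun i _ => integrable_dirac'' hf _).smul_measure
    (natcast_inv_ne_top hn)

lemma integral_empirical {n : ℕ} (hn : 1 ≤ n) (r : Fin n → EuclideanSpace ℝ (Fin K))
    {f : EuclideanSpace ℝ (Fin K) → ℝ} (hf : StronglyMeasurable f) :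
    ∫ x, f x ∂(empiricalMeasure n r) = (n : ℝ)⁻¹ * ∑ i, f (r i) := by
  unfold empiricalMeasure
  rw [integral_smul_measure, integral_finset_sum_measure fun i _ => integrable_dirac'' hf _]
  simp [integral_dirac, smul_eq_mul]

lemma moment_empirical {n : ℕ} (hn : 1 ≤ n) (r : Fin n → EuclideanSpace ℝ (Fin K)) :
    ∫⁻ x, (‖x‖₊ : ℝ≥0∞) ∂(empiricalMeasure n r) < ⊤ := by
  unfold empiricalMeasure
  rw [lintegral_smul_measure, lintegral_finset_sum_measure]
  simp only [lintegral_dirac]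
  exact ENNReal.mul_lt_top (Ne.lt_top (natcast_inv_ne_top hn))
    (ENNReal.sum_lt_top.mpr fun i _ => ENNReal.coe_lt_top)


variable {K : ℕ}

lemma integral_f_le {w : EuclideanSpace ℝ (Fin K)} {η : ℝ}
    {μ ν : Measure (EuclideanSpace ℝ (Fin K))}
    [IsProbabilityMeasure μ] [IsProbabilityMeasure ν]
    (hμm : ∫⁻ x, (‖x‖₊ : ℝ≥0∞) ∂μ < ⊤) (hνm : ∫⁻ x, (‖x‖₊ : ℝ≥0∞) ∂ν < ⊤)
    {π : Measure (EuclideanSpace ℝ (Fin K) × EuclideanSpace ℝ (Fin K))}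
    (hπ : IsCoupling π μ ν) {c : ℝ} (hc0 : 0 ≤ c)
    (hcost : ∫⁻ p, edist p.1 p.2 ∂π ≤ ENNReal.ofReal c) :
    ∫ x, max (-(inner ℝ x w : ℝ) - η) 0 ∂μ
      ≤ (∫ x, max (-(inner ℝ x w : ℝ) - η) 0 ∂ν) + ‖w‖ * c := by
  set f : EuclideanSpace ℝ (Fin K) → ℝ := fun x => max (-(inner ℝ x w : ℝ) - η) 0 with hf
  have hfc : Continuous f := cont_f w η
  have hInt1 : Integrable (fun p : _ × _ => f p.1) π := by
    have h := integrable_f hμm w η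
    rw [← hπ.1] at h
    have := (integrable_map_measure (hfc.aestronglyMeasurable)
      measurable_fst.aemeasurable).1 h
    exact this
  have hInt2 : Integrable (fun p : _ × _ => f p.2) π := by
    have h := integrable_f hνm w η
    rw [← hπ.2] at h
    have := (integrable_map_measure (hfc.aestronglyMeasurable)
      measurable_snd.aemeasurable).1 h
    exact this
  have hedist : ∀ p : EuclideanSpace ℝ (Fin K) × EuclideanSpace ℝ (Fin K),
      ((‖dist p.1 p.2‖₊ : ℝ≥0∞)) = edist p.1 p.2 := by
    intro p
    rw [← enorm_eq_nnnorm, Real.enorm_eq_ofReal dist_nonneg, ← edist_dist]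
  have hIntd : Integrable (fun p : _ × _ => dist p.1 p.2) π := by
    refine ⟨(continuous_fst.dist continuous_snd).aestronglyMeasurable, ?_⟩
    rw [HasFiniteIntegral]
    calc ∫⁻ p, (‖dist p.1 p.2‖₊ : ℝ≥0∞) ∂π = ∫⁻ p, edist p.1 p.2 ∂π := by
          simp_rw [hedist]
      _ ≤ ENNReal.ofReal c := hcost
      _ < ⊤ := ofReal_lt_top
  have hpt : ∀ p : EuclideanSpace ℝ (Fin K) × EuclideanSpace ℝ (Fin K),
      f p.1 ≤ f p.2 + ‖w‖ * dist p.1 p.2 := by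
    intro p
    have hd : (0:ℝ) ≤ ‖w‖ * dist p.1 p.2 := by positivity
    have h2 : (inner ℝ (p.2 - p.1) w : ℝ) ≤ ‖w‖ * dist p.1 p.2 := by
      calc (inner ℝ (p.2 - p.1) w : ℝ) ≤ ‖p.2 - p.1‖ * ‖w‖ := real_inner_le_norm _ _
        _ = ‖w‖ * dist p.1 p.2 := by
            rw [dist_eq_norm, norm_sub_rev]; ring
    have h3 : (inner ℝ (p.2 - p.1) w : ℝ) = (inner ℝ p.2 w : ℝ) - (inner ℝ p.1 w : ℝ) :=
      inner_sub_left _ _ _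
    apply max_le
    · have : -(inner ℝ p.2 w : ℝ) - η ≤ f p.2 := le_max_left _ _
      linarith
    · have : (0:ℝ) ≤ f p.2 := le_max_right _ _
      linarith
  have hdle : ∫ p, dist p.1 p.2 ∂π ≤ c := by
    rw [integral_eq_lintegral_of_nonneg_ae (Filter.Eventually.of_forall fun p => dist_nonneg)
      (continuous_fst.dist continuous_snd).aestronglyMeasurable]
    simp_rw [← edist_dist]
    exact ENNReal.toReal_le_of_le_ofReal hc0 hcost
  calc ∫ x, f x ∂μ = ∫ p, f p.1 ∂π := by
        rw [← hπ.1, integral_map measurable_fst.aemeasurable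
          (hfc.aestronglyMeasurable)]
    _ ≤ ∫ p, (f p.2 + ‖w‖ * dist p.1 p.2) ∂π :=
        integral_mono hInt1 (hInt2.add (hIntd.const_mul _)) hpt
    _ = ∫ p, f p.2 ∂π + ‖w‖ * ∫ p, dist p.1 p.2 ∂π := by
        rw [integral_add hInt2 (hIntd.const_mul _), integral_const_mul]
    _ = ∫ x, f x ∂ν + ‖w‖ * ∫ p, dist p.1 p.2 ∂π := by
        rw [← hπ.2, integral_map measurable_snd.aemeasurable
          (hfc.aestronglyMeasurable)]
    _ ≤ ∫ x, f x ∂ν + ‖w‖ * c := by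
        have := mul_le_mul_of_nonneg_left hdle (norm_nonneg w)
        linarith

lemma cvar_le_of_W1 {w : EuclideanSpace ℝ (Fin K)} {α ε : ℝ}
    (hα0 : 0 < α) (hα1 : α < 1) (hε : 0 ≤ ε)
    (μ ν : Measure (EuclideanSpace ℝ (Fin K)))
    [IsProbabilityMeasure μ] [IsProbabilityMeasure ν]
    (hμm : ∫⁻ x, (‖x‖₊ : ℝ≥0∞) ∂μ < ⊤) (hνm : ∫⁻ x, (‖x‖₊ : ℝ≥0∞) ∂ν < ⊤)
    (hW : W1 μ ν ≤ ENNReal.ofReal ε) :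
    CVaR α μ w ≤ CVaR α ν w + (ε / α) * ‖w‖ := by
  refine le_of_forall_pos_le_add fun δ hδ => ?_
  set c := ε + δ * α / (‖w‖ + 1) with hc
  have hw1 : (0:ℝ) < ‖w‖ + 1 := by positivity
  have hcε : ε < c := by
    have h : 0 < δ * α / (‖w‖ + 1) := by positivity
    rw [hc]
    linarith
  have hc0 : 0 ≤ c := by linarith
  have hlt : W1 μ ν < ENNReal.ofReal c :=
    lt_of_le_of_lt hW (ENNReal.ofReal_lt_ofReal_iff (by linarith)|>.2 hcε)
  rw [W1] at hlt
  obtain ⟨π, hπlt⟩ := iInf_lt_iff.1 hlt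
  obtain ⟨hπ, hcost⟩ := iInf_lt_iff.1 hπlt
  have key : ∀ η, ∫ x, max (-(inner ℝ x w : ℝ) - η) 0 ∂μ
      ≤ (∫ x, max (-(inner ℝ x w : ℝ) - η) 0 ∂ν) + ‖w‖ * c :=
    fun η => integral_f_le hμm hνm hπ hc0 hcost.le
  have h2 : CVaR α μ w - (1/α) * (‖w‖ * c) ≤ CVaR α ν w := by
    refine le_ciInf fun η => ?_
    have hμη : CVaR α μ w ≤ η + (1/α) * ∫ x, max (-(inner ℝ x w : ℝ) - η) 0 ∂μ :=
      ciInf_le (bddBelow_h hα0 hα1 w μ hμm) η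
    have hk := mul_le_mul_of_nonneg_left (key η) (le_of_lt (by positivity : (0:ℝ) < 1/α))
    rw [mul_add] at hk
    linarith
  have h3 : (1/α) * (‖w‖ * c) ≤ (ε/α) * ‖w‖ + δ := by
    rw [hc]
    have hwle : ‖w‖ / (‖w‖ + 1) ≤ 1 := by
      rw [div_le_one hw1]; linarith
    have : (1/α) * (‖w‖ * (ε + δ * α / (‖w‖ + 1))) = (ε/α) * ‖w‖ + δ * (‖w‖ / (‖w‖ + 1)) := by
      field_simp
    rw [this]
    nlinarith
  linarith

end Aux

set_option maxHeartbeats 1000000 in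
theorem stmt_15 {K : ℕ} (hK : 1 ≤ K) (n : ℕ) (hn : 1 ≤ n)
    (r : Fin n → EuclideanSpace ℝ (Fin K))
    (α : ℝ) (hα0 : 0 < α) (hα1 : α < 1) (ε : ℝ) (hε : 0 ≤ ε)
    (w : EuclideanSpace ℝ (Fin K)) :
    sSup {y : ℝ | ∃ R : Measure (EuclideanSpace ℝ (Fin K)),
        IsProbabilityMeasure R ∧ (∫⁻ x, (‖x‖₊ : ℝ≥0∞) ∂ R) < ⊤ ∧
        W1 R (empiricalMeasure n r) ≤ ENNReal.ofReal ε ∧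
        y = CVaR α R w}
      = CVaR α (empiricalMeasure n r) w + (ε / α) * ‖w‖ := by
  classical
  haveI : Nonempty (Fin n) := ⟨⟨0, hn⟩⟩
  set μh := empiricalMeasure n r with hμh
  haveI : IsProbabilityMeasure μh := isProb_empirical hn r
  have hμhm : ∫⁻ x, (‖x‖₊ : ℝ≥0∞) ∂μh < ⊤ := moment_empirical hn r
  have hnR : (0:ℝ) < (n:ℝ) := by exact_mod_cast hn
  -- max atom
  obtain ⟨is, -, his⟩ := Finset.exists_mem_eq_sup' (Finset.univ_nonempty (α := Fin n))
    (fun i => -(inner ℝ (r i) w : ℝ))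
  set L := Finset.univ.sup' Finset.univ_nonempty (fun i => -(inner ℝ (r i) w : ℝ)) with hLdef
  have hL : ∀ i, -(inner ℝ (r i) w : ℝ) ≤ L := by
    intro i
    rw [hLdef]
    exact Finset.le_sup' (fun i => -(inner ℝ (r i) w : ℝ)) (Finset.mem_univ i)
  -- parameters
  set β := min α (n:ℝ)⁻¹ with hβdef
  have hβ0 : 0 < β := lt_min hα0 (by positivity)
  have hβα : β ≤ α := min_le_left _ _
  have hβn : β ≤ (n:ℝ)⁻¹ := min_le_right _ _
  set u : EuclideanSpace ℝ (Fin K) := ‖w‖⁻¹ • w with hudef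
  have huw : (inner ℝ u w : ℝ) = ‖w‖ := by
    rw [hudef, real_inner_smul_left, real_inner_self_eq_norm_mul_norm]
    rcases eq_or_ne w 0 with h | h
    · simp [h]
    · have : ‖w‖ ≠ 0 := norm_ne_zero_iff.2 h
      field_simp
  have hun : ‖u‖ ≤ 1 := by
    rw [hudef, norm_smul, norm_inv, norm_norm]
    rcases eq_or_ne w 0 with h | h
    · simp [h]
    · have : ‖w‖ ≠ 0 := norm_ne_zero_iff.2 h
      rw [inv_mul_cancel₀ this]
  set p : EuclideanSpace ℝ (Fin K) := r is - (ε/β) • u with hpdef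
  have hlp : -(inner ℝ p w : ℝ) = L + (ε/β) * ‖w‖ := by
    rw [hpdef, inner_sub_left, real_inner_smul_left, huw, his]
    ring
  have hdistp : dist p (r is) = (ε/β) * ‖u‖ := by
    rw [hpdef, dist_eq_norm]
    have : r is - (ε/β) • u - r is = -((ε/β) • u) := by abel
    rw [this, norm_neg, norm_smul, Real.norm_eq_abs, abs_of_nonneg (by positivity)]
  -- measures
  set b : ℝ≥0∞ := ENNReal.ofReal β with hbdef
  have hbne : b ≠ ⊤ := ofReal_ne_top
  set ν : Measure (EuclideanSpace ℝ (Fin K)) :=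
    ENNReal.ofReal ((n:ℝ)⁻¹ - β) • Measure.dirac (r is)
      + (n : ℝ≥0∞)⁻¹ • ∑ i ∈ Finset.univ.erase is, Measure.dirac (r i) with hνdef
  have hsplit : ((n : ℝ≥0∞))⁻¹ = ENNReal.ofReal ((n:ℝ)⁻¹ - β) + b := by
    rw [hbdef, ← ENNReal.ofReal_add (by linarith) hβ0.le, sub_add_cancel,
      ENNReal.ofReal_inv_of_pos hnR, ENNReal.ofReal_natCast]
  have hdec : μh = ν + b • Measure.dirac (r is) := by
    rw [hμh, hνdef]
    unfold empiricalMeasure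
    rw [← Finset.add_sum_erase Finset.univ (fun i => Measure.dirac (r i)) (Finset.mem_univ is),
      smul_add]
    nth_rewrite 1 [hsplit]
    rw [add_smul, add_right_comm]
  set R : Measure (EuclideanSpace ℝ (Fin K)) := ν + b • Measure.dirac p with hRdef
  haveI hRprob : IsProbabilityMeasure R := by
    constructor
    have h1 : μh Set.univ = ν Set.univ + b := by
      rw [hdec]; simp [Measure.add_apply]
    have h2 : R Set.univ = ν Set.univ + b := by
      rw [hRdef]; simp [Measure.add_apply]
    rw [h2, ← h1, measure_univ]
  have hνle : ν ≤ μh := by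
    rw [hdec]
    exact Measure.le_add_right le_rfl
  have hmomR : ∫⁻ x, (‖x‖₊ : ℝ≥0∞) ∂ R < ⊤ := by
    have hν : ∫⁻ x, (‖x‖₊ : ℝ≥0∞) ∂ν ≤ ∫⁻ x, (‖x‖₊ : ℝ≥0∞) ∂μh :=
      lintegral_mono' hνle le_rfl
    have : ∫⁻ x, (‖x‖₊ : ℝ≥0∞) ∂ R = (∫⁻ x, (‖x‖₊ : ℝ≥0∞) ∂ν) + b * ‖p‖₊ := by
      rw [hRdef, lintegral_add_measure, lintegral_smul_measure, lintegral_dirac, smul_eq_mul]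
    rw [this]
    exact ENNReal.add_lt_top.2 ⟨lt_of_le_of_lt hν hμhm,
      ENNReal.mul_lt_top hbne.lt_top ENNReal.coe_lt_top⟩
  -- coupling
  have hdiagmeas : Measurable (fun x : EuclideanSpace ℝ (Fin K) => (x, x)) :=
    measurable_id.prodMk measurable_id
  set π : Measure (EuclideanSpace ℝ (Fin K) × EuclideanSpace ℝ (Fin K)) :=
    Measure.map (fun x => (x, x)) ν + b • Measure.dirac (p, r is) with hπdef
  have hcoup : IsCoupling π R μh := by
    constructor
    · rw [hπdef, Measure.map_add _ _ measurable_fst, Measure.map_smul,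
        Measure.map_map measurable_fst hdiagmeas, Measure.map_dirac' measurable_fst]
      have : (Prod.fst ∘ fun x : EuclideanSpace ℝ (Fin K) => (x, x)) = id := rfl
      rw [this, Measure.map_id, hRdef]
    · rw [hπdef, Measure.map_add _ _ measurable_snd, Measure.map_smul,
        Measure.map_map measurable_snd hdiagmeas, Measure.map_dirac' measurable_snd]
      have : (Prod.snd ∘ fun x : EuclideanSpace ℝ (Fin K) => (x, x)) = id := rfl
      rw [this, Measure.map_id, ← hdec]
  have hcost : ∫⁻ q, edist q.1 q.2 ∂π ≤ ENNReal.ofReal ε := by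
    rw [hπdef, lintegral_add_measure, lintegral_smul_measure, lintegral_dirac,
      lintegral_map (measurable_fst.edist measurable_snd) hdiagmeas]
    simp only [edist_self, lintegral_zero, zero_add]
    rw [edist_dist, hdistp]
    calc b * ENNReal.ofReal ((ε/β) * ‖u‖)
        ≤ b * ENNReal.ofReal (ε/β) := by
          refine mul_le_mul_right (ENNReal.ofReal_le_ofReal ?_) _
          nlinarith [div_nonneg hε hβ0.le]
      _ = ENNReal.ofReal (β * (ε/β)) := by
          rw [hbdef, ← ENNReal.ofReal_mul hβ0.le]
      _ = ENNReal.ofReal ε := by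
          rw [mul_comm, div_mul_cancel₀ ε hβ0.ne']
  have hW1R : W1 R μh ≤ ENNReal.ofReal ε := by
    refine le_trans ?_ hcost
    exact iInf₂_le π hcoup
  -- integral identities
  have hsm : ∀ η : ℝ, StronglyMeasurable
      (fun x : EuclideanSpace ℝ (Fin K) => max (-(inner ℝ x w : ℝ) - η) 0) :=
    fun η => (cont_f w η).stronglyMeasurable
  have hIν : ∀ η : ℝ, Integrable (fun x => max (-(inner ℝ x w : ℝ) - η) 0) ν := by
    intro η
    rw [hνdef]
    exact ((integrable_dirac'' (hsm η) _).smul_measure ofReal_ne_top).add_measure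
      (((integrable_finset_sum_measure).2 fun i _ =>
        integrable_dirac'' (hsm η) _).smul_measure (natcast_inv_ne_top hn))
  have hβtoReal : b.toReal = β := ENNReal.toReal_ofReal hβ0.le
  have hR_int : ∀ η : ℝ, ∫ x, max (-(inner ℝ x w : ℝ) - η) 0 ∂ R
      = (∫ x, max (-(inner ℝ x w : ℝ) - η) 0 ∂ν) + β * max (-(inner ℝ p w : ℝ) - η) 0 := by
    intro η
    rw [hRdef, integral_add_measure (hIν η) ((integrable_dirac'' (hsm η) p).smul_measure hbne),
      integral_smul_measure, integral_dirac, hβtoReal, smul_eq_mul]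
  have hμh_int : ∀ η : ℝ, ∫ x, max (-(inner ℝ x w : ℝ) - η) 0 ∂μh
      = (∫ x, max (-(inner ℝ x w : ℝ) - η) 0 ∂ν) + β * max (-(inner ℝ (r is) w : ℝ) - η) 0 := by
    intro η
    rw [hdec, integral_add_measure (hIν η)
      ((integrable_dirac'' (hsm η) (r is)).smul_measure hbne),
      integral_smul_measure, integral_dirac, hβtoReal, smul_eq_mul]
  have hμh0 : ∀ η : ℝ, L ≤ η → ∫ x, max (-(inner ℝ x w : ℝ) - η) 0 ∂μh = 0 := by
    intro η hη
    rw [hμh, integral_empirical hn r (hsm η)]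
    rw [Finset.sum_eq_zero, mul_zero]
    intro i _
    exact max_eq_right (by linarith [hL i])
  have hCle : CVaR α μh w ≤ L := by
    have h1 : CVaR α μh w ≤ L + (1/α) * ∫ x, max (-(inner ℝ x w : ℝ) - L) 0 ∂μh :=
      ciInf_le (bddBelow_h hα0 hα1 w μh hμhm) L
    rw [hμh0 L le_rfl, mul_zero, add_zero] at h1
    exact h1
  -- lower bound for CVaR R
  have hTle : CVaR α μh w + (ε/α) * ‖w‖ ≤ CVaR α R w := by
    refine le_ciInf fun η => ?_
    have hcomb : ∫ x, max (-(inner ℝ x w : ℝ) - η) 0 ∂ R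
        = (∫ x, max (-(inner ℝ x w : ℝ) - η) 0 ∂μh)
          - β * max (L - η) 0 + β * max (L + (ε/β) * ‖w‖ - η) 0 := by
      rw [hR_int η, hμh_int η, hlp, ← his]
      ring
    rw [hcomb]
    have hβM : (0:ℝ) ≤ (ε/β) * ‖w‖ := by positivity
    rcases le_or_gt η L with hηL | hLη
    · rw [max_eq_left (by linarith), max_eq_left (by linarith)]
      have h1 : CVaR α μh w ≤ η + (1/α) * ∫ x, max (-(inner ℝ x w : ℝ) - η) 0 ∂μh :=
        ciInf_le (bddBelow_h hα0 hα1 w μh hμhm) η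
      have heq : η + (1/α) * ((∫ x, max (-(inner ℝ x w : ℝ) - η) 0 ∂μh)
            - β * (L - η) + β * (L + (ε/β) * ‖w‖ - η))
          = (η + (1/α) * ∫ x, max (-(inner ℝ x w : ℝ) - η) 0 ∂μh) + (1/α) * (ε * ‖w‖) := by
        have hβmul : β * (ε/β) = ε := by
          rw [mul_comm, div_mul_cancel₀ ε hβ0.ne']
        linear_combination (1/α) * ‖w‖ * hβmul
      rw [heq]
      have : (ε/α) * ‖w‖ = (1/α) * (ε * ‖w‖) := by ring
      linarith
    · rw [hμh0 η hLη.le, max_eq_right (by linarith)]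
      have hdiv : (ε/α) * ‖w‖ ≤ (ε/β) * ‖w‖ :=
        mul_le_mul_of_nonneg_right (div_le_div_of_nonneg_left hε hβ0 hβα) (norm_nonneg w)
      rcases le_or_gt (L + (ε/β) * ‖w‖) η with hM | hM
      · rw [max_eq_right (by linarith)]
        have : η + (1/α) * (0 - β * 0 + β * 0) = η := by ring
        rw [this]
        linarith
      · rw [max_eq_left (by linarith)]
        have hβα' : β/α ≤ 1 := (div_le_one hα0).2 hβα
        have hβmul : β * (ε/β) = ε := by
          rw [mul_comm, div_mul_cancel₀ ε hβ0.ne']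
        have heq : η + (1/α) * (0 - β * 0 + β * (L + (ε/β) * ‖w‖ - η))
            = η + (β/α) * (L - η) + (ε/α) * ‖w‖ := by
          linear_combination (1/α) * ‖w‖ * hβmul
        rw [heq]
        have hprod : 0 ≤ (η - L) * (1 - β/α) := by
          apply mul_nonneg <;> linarith
        nlinarith [hCle]
  have hRle : CVaR α R w ≤ CVaR α μh w + (ε/α) * ‖w‖ :=
    cvar_le_of_W1 hα0 hα1 hε R μh hmomR hμhm hW1R
  have hReq : CVaR α R w = CVaR α μh w + (ε/α) * ‖w‖ := le_antisymm hRle hTle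
  -- conclude
  have hmem : CVaR α μh w + (ε/α) * ‖w‖ ∈ {y : ℝ | ∃ R' : Measure (EuclideanSpace ℝ (Fin K)),
      IsProbabilityMeasure R' ∧ (∫⁻ x, (‖x‖₊ : ℝ≥0∞) ∂ R') < ⊤ ∧
      W1 R' μh ≤ ENNReal.ofReal ε ∧
      CVaR α μh w + (ε/α) * ‖w‖ = CVaR α R' w} :=
    ⟨R, hRprob, hmomR, hW1R, hReq.symm⟩
  have hub : ∀ y ∈ {y : ℝ | ∃ R' : Measure (EuclideanSpace ℝ (Fin K)),
      IsProbabilityMeasure R' ∧ (∫⁻ x, (‖x‖₊ : ℝ≥0∞) ∂ R') < ⊤ ∧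
      W1 R' μh ≤ ENNReal.ofReal ε ∧ y = CVaR α R' w},
      y ≤ CVaR α μh w + (ε/α) * ‖w‖ := by
    rintro y ⟨R', h1, h2, h3, rfl⟩
    haveI := h1
    exact cvar_le_of_W1 hα0 hα1 hε R' μh h2 hμhm h3
  refine le_antisymm (csSup_le ⟨_, hmem⟩ hub) (le_csSup ⟨_, hub⟩ hmem)
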